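/- Let q be a prime power, n a positive integer, and ≺ a monomial ordering on the monomials of F_q[X_1, ..., X_n]. Let P(X_1, ..., X_n) be a nonzero polynomial over F_q whose leading monomial with respect to ≺ equals X_1^{i_1} ··· X_n^{i_n} with i_s < q-1 for s = 1, ..., n. Let m be the number of points x in (F_q^*)^n with P(x) ≠ 0. Then m ≥ \prod_{s=1}^n (q-1-i_s). -/

import Mathlib

open scoped MonomialOrder

set_option maxHeartbeats 1000000

/-- `e` is the leading monomial (exponent vector) of the nonzero polynomial `f`
with respect to the monomial order `mo`. -/
def IsLeadingMonomialOf {σ : Type*} (mo : MonomialOrder σ) {R : Type*} [CommSemiring R]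
    (f : MvPolynomial σ R) (e : σ →₀ ℕ) : Prop :=
  e ∈ f.support ∧ ∀ e' ∈ f.support, e' ≼[mo] e

private lemma sum_units_pow (F : Type*) [Field F] [Fintype F] [DecidableEq F] (a : ℕ) :
    ∑ u : Fˣ, ((u : F)) ^ a = if (Fintype.card F - 1) ∣ a then (-1 : F) else 0 := by
  have h : ∀ u : Fˣ, ((u : F)) ^ a = ((u ^ a : Fˣ) : F) :=
    fun u => (Units.val_pow_eq_pow_val u a).symm
  simp_rw [h]
  exact FiniteField.sum_pow_units F a

/-- If a polynomial vanishes on `(F^*)^n`, and `L` (with all exponents `< q-1`) is the only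
monomial in its support congruent to `L` mod `q-1` componentwise, then `coeff L = 0`. -/
private lemma coeff_eq_zero_of_vanishing {F : Type*} [Field F] [Fintype F] {n : ℕ}
    (f : MvPolynomial (Fin n) F)
    (hv : ∀ x : Fin n → Fˣ, MvPolynomial.eval (fun s => (x s : F)) f = 0)
    (L : Fin n →₀ ℕ) (hL : ∀ s, L s < Fintype.card F - 1)
    (honly : ∀ e ∈ f.support,
      (∀ s, (Fintype.card F - 1) ∣ (e s + (Fintype.card F - 1 - L s))) → e = L) :
    MvPolynomial.coeff L f = 0 := by
  classical
  set d := Fintype.card F - 1 with hd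
  have key : (0 : F) = ∑ e ∈ f.support, MvPolynomial.coeff e f *
      ∏ s, (if d ∣ (e s + (d - L s)) then (-1 : F) else 0) := by
    calc (0 : F) = ∑ x : Fin n → Fˣ,
        (MvPolynomial.eval (fun s => (x s : F)) f) * ∏ s, ((x s : F)) ^ (d - L s) := by
          simp [hv]
      _ = ∑ x : Fin n → Fˣ, ∑ e ∈ f.support,
          MvPolynomial.coeff e f * ∏ s, ((x s : F)) ^ (e s + (d - L s)) := by
          refine Finset.sum_congr rfl fun x _ => ?_
          rw [MvPolynomial.eval_eq', Finset.sum_mul]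
          refine Finset.sum_congr rfl fun e _ => ?_
          rw [mul_assoc, ← Finset.prod_mul_distrib]
          simp [pow_add]
      _ = ∑ e ∈ f.support, MvPolynomial.coeff e f *
          ∑ x : Fin n → Fˣ, ∏ s, ((x s : F)) ^ (e s + (d - L s)) := by
          rw [Finset.sum_comm]
          simp [Finset.mul_sum]
      _ = ∑ e ∈ f.support, MvPolynomial.coeff e f *
          ∏ s, (if d ∣ (e s + (d - L s)) then (-1 : F) else 0) := by
          refine Finset.sum_congr rfl fun e _ => ?_
          congr 1
          rw [← Fintype.prod_sum (fun s (u : Fˣ) => ((u : F)) ^ (e s + (d - L s)))]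
          exact Finset.prod_congr rfl fun s _ => sum_units_pow F _
  have hterm : ∀ e ∈ f.support,
      MvPolynomial.coeff e f * ∏ s, (if d ∣ (e s + (d - L s)) then (-1 : F) else 0)
      = if e = L then MvPolynomial.coeff e f * (-1 : F) ^ n else 0 := by
    intro e he
    by_cases hall : ∀ s, d ∣ (e s + (d - L s))
    · have heL : e = L := honly e he hall
      rw [if_pos heL]
      congr 1
      calc (∏ s, (if d ∣ (e s + (d - L s)) then (-1 : F) else 0))
          = ∏ _s : Fin n, (-1 : F) := Finset.prod_congr rfl fun s _ => if_pos (hall s)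
        _ = (-1 : F) ^ n := by rw [Finset.prod_const, Finset.card_univ, Fintype.card_fin]
    · obtain ⟨s0, hs0⟩ := not_forall.mp hall
      have he_ne : e ≠ L := by
        intro heL
        apply hall
        intro s
        rw [heL, Nat.add_sub_cancel' (le_of_lt (hL s))]
      have hz : (if d ∣ (e s0 + (d - L s0)) then (-1 : F) else 0) = 0 := if_neg hs0
      rw [if_neg he_ne, Finset.prod_eq_zero (Finset.mem_univ s0) hz, mul_zero]
  have key2 : (0 : F) = if L ∈ f.support then MvPolynomial.coeff L f * (-1 : F) ^ n else 0 := by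
    rw [key, Finset.sum_congr rfl hterm, Finset.sum_ite_eq' f.support L
      (fun e => MvPolynomial.coeff e f * (-1 : F) ^ n)]
    split_ifs <;> rfl
  by_cases hLs : L ∈ f.support
  · rw [if_pos hLs] at key2
    have hne : (-1 : F) ^ n ≠ 0 := pow_ne_zero n (by norm_num)
    exact (mul_eq_zero.mp key2.symm).resolve_right hne
  · exact MvPolynomial.notMem_support_iff.mp hLs

theorem card_nonroots_ge_prod
    {F : Type*} [Field F] [Fintype F] {q n : ℕ} (hq : Fintype.card F = q) (hn : 0 < n)
    (mo : MonomialOrder (Fin n)) (P : MvPolynomial (Fin n) F) (hP : P ≠ 0)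
    (i : Fin n →₀ ℕ) (hlm : IsLeadingMonomialOf mo P i) (hi : ∀ s, i s < q - 1)
    (m : ℕ)
    (hm : m = Nat.card {x : Fin n → F | (∀ s, x s ≠ 0) ∧ MvPolynomial.eval x P ≠ 0}) :
    ∏ s : Fin n, (q - 1 - i s) ≤ m := by
  classical
  subst hq
  set A := {x : Fin n → F | (∀ s, x s ≠ 0) ∧ MvPolynomial.eval x P ≠ 0} with hA
  haveI : Fintype ↥A := Fintype.ofFinite _
  set toExp : (∀ s : Fin n, Fin (Fintype.card F - 1 - i s)) → (Fin n →₀ ℕ) := fun e => Finsupp.equivFunOnFinite.symm (fun s => (e s : ℕ))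
    with htoExp
  have htoExp_apply : ∀ (e : (∀ s : Fin n, Fin (Fintype.card F - 1 - i s))) (s : Fin n), toExp e s = (e s : ℕ) := fun _ _ => rfl
  have hinj : Function.Injective toExp := by
    intro a b hab
    funext s
    have := congrArg (fun g => g s) hab
    simpa [htoExp_apply, Fin.val_injective.eq_iff] using this
  set v : (∀ s : Fin n, Fin (Fintype.card F - 1 - i s)) → (↥A → F) := fun e x =>
    MvPolynomial.eval x.1 P * ∏ s, (x.1 s) ^ ((e s : ℕ)) with hv
  have hlin : LinearIndependent F v := by
    rw [Fintype.linearIndependent_iff]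
    intro c hc e0
    by_contra hc0
    set Q : MvPolynomial (Fin n) F :=
      ∑ e, MvPolynomial.monomial (toExp e) (c e) with hQ
    have coeffQ : ∀ e, MvPolynomial.coeff (toExp e) Q = c e := by
      intro e
      rw [hQ, MvPolynomial.coeff_sum]
      simp [MvPolynomial.coeff_monomial, hinj.eq_iff]
    have hQ0 : Q ≠ 0 := fun h => hc0 (by rw [← coeffQ e0, h, MvPolynomial.coeff_zero])
    have hQsupp : ∀ μ ∈ Q.support, ∃ e, toExp e = μ := by
      intro μ hμ
      by_contra hnone
      push_neg at hnone
      apply MvPolynomial.mem_support_iff.mp hμ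
      rw [hQ, MvPolynomial.coeff_sum]
      refine Finset.sum_eq_zero fun e _ => ?_
      rw [MvPolynomial.coeff_monomial, if_neg (hnone e)]
    obtain ⟨μ, hμ, hμmax⟩ := Finset.exists_max_image Q.support mo.toSyn
      (MvPolynomial.support_nonempty.mpr hQ0)
    set L : Fin n →₀ ℕ := i + μ with hLdef
    have hLlt : ∀ s, L s < Fintype.card F - 1 := by
      intro s
      obtain ⟨e, he⟩ := hQsupp μ hμ
      have h1 : μ s < Fintype.card F - 1 - i s := by rw [← he, htoExp_apply]; exact (e s).2
      have h2 := hi s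
      have : L s = i s + μ s := rfl
      omega
    -- evaluate Q
    have hevalQ : ∀ x : Fin n → F, MvPolynomial.eval x Q
        = ∑ e, c e * ∏ s, (x s) ^ ((e s : ℕ)) := by
      intro x
      rw [hQ, map_sum]
      refine Finset.sum_congr rfl fun e _ => ?_
      rw [MvPolynomial.eval_monomial]
      congr 1
      rw [Finsupp.prod_fintype _ _ (fun s => pow_zero _)]
      rfl
    have hvan : ∀ x : Fin n → Fˣ,
        MvPolynomial.eval (fun s => (x s : F)) (P * Q) = 0 := by
      intro x
      rw [map_mul]
      by_cases hPx : MvPolynomial.eval (fun s => (x s : F)) P = 0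
      · rw [hPx, zero_mul]
      · have hxA : (fun s => (x s : F)) ∈ A := ⟨fun s => Units.ne_zero _, hPx⟩
        have := congrFun hc ⟨_, hxA⟩
        simp only [Finset.sum_apply, Pi.smul_apply, smul_eq_mul, Pi.zero_apply, hv] at this
        rw [hevalQ, Finset.mul_sum]
        rw [← this]
        refine Finset.sum_congr rfl fun e _ => ?_
        ring
    have hcoeffL : MvPolynomial.coeff L (P * Q)
        = MvPolynomial.coeff i P * MvPolynomial.coeff μ Q := by
      rw [MvPolynomial.coeff_mul]
      refine Finset.sum_eq_single (i, μ) ?_ ?_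
      · rintro ⟨a, b⟩ hab hne
        rw [Finset.HasAntidiagonal.mem_antidiagonal] at hab
        by_contra h0
        have ha : a ∈ P.support := by
          rw [MvPolynomial.mem_support_iff]
          intro h; exact h0 (by rw [h, zero_mul])
        have hb : b ∈ Q.support := by
          rw [MvPolynomial.mem_support_iff]
          intro h; exact h0 (by rw [h, mul_zero])
        have h1 : mo.toSyn a ≤ mo.toSyn i := hlm.2 a ha
        have h2 : mo.toSyn b ≤ mo.toSyn μ := hμmax b hb
        have h3 : mo.toSyn a + mo.toSyn b = mo.toSyn i + mo.toSyn μ := by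
          rw [← map_add, ← map_add, hab, hLdef]
        have hai : a = i := by
          by_contra hne'
          have : mo.toSyn a < mo.toSyn i :=
            lt_of_le_of_ne h1 (fun h => hne' (mo.toSyn.injective h))
          exact absurd h3 (ne_of_lt (add_lt_add_of_lt_of_le this h2))
        have hbμ : b = μ := by
          apply mo.toSyn.injective
          have := h3
          rw [hai] at this
          exact add_left_cancel this
        exact hne (by rw [hai, hbμ])
      · intro h
        exact absurd (Finset.HasAntidiagonal.mem_antidiagonal.mpr (hLdef.symm : i + μ = L)) h
    have hcoeffL0 : MvPolynomial.coeff L (P * Q) ≠ 0 := by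
      rw [hcoeffL]
      exact mul_ne_zero (MvPolynomial.mem_support_iff.mp hlm.1)
        (MvPolynomial.mem_support_iff.mp hμ)
    apply hcoeffL0
    refine coeff_eq_zero_of_vanishing (P * Q) hvan L hLlt ?_
    intro e he hdvd
    have hge : ∀ s, L s ≤ e s := by
      intro s
      by_contra hlt
      push_neg at hlt
      obtain ⟨t, ht⟩ := hdvd s
      have hLs := hLlt s
      rcases Nat.eq_zero_or_pos t with rfl | htpos
      · simp at ht; omega
      · have hge' : Fintype.card F - 1 ≤ (Fintype.card F - 1) * t := Nat.le_mul_of_pos_right _ htpos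
        omega
    have hLe : mo.toSyn L ≤ mo.toSyn e := mo.toSyn_monotone (Finsupp.le_def.mpr hge)
    have heL : mo.toSyn e ≤ mo.toSyn L := by
      have hsub := MvPolynomial.support_mul P Q he
      rw [Finset.mem_add] at hsub
      obtain ⟨a, ha, b, hb, hab⟩ := hsub
      calc mo.toSyn e = mo.toSyn a + mo.toSyn b := by rw [← map_add, hab]
        _ ≤ mo.toSyn i + mo.toSyn μ := add_le_add (hlm.2 a ha) (hμmax b hb)
        _ = mo.toSyn L := by rw [← map_add, hLdef]
    exact mo.toSyn.injective (le_antisymm heL hLe)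
  have hle : Fintype.card (∀ s : Fin n, Fin (Fintype.card F - 1 - i s))
      ≤ Module.finrank F (↥A → F) := hlin.fintype_card_le_finrank
  rw [Module.finrank_fintype_fun_eq_card, Fintype.card_pi] at hle
  simp only [Fintype.card_fin] at hle
  rw [hm, Nat.card_eq_fintype_card]
  exact hle
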